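/- arXiv:1509.04107 — 8 statements merged into one kernel-verified Lean document; each statement's English description precedes it below -/
import Mathlib

section
/- Let A be an integral domain and let f ∈ A be nonzero. For i = 1, 2, let B_i be an integral domain that is integrally closed in its field of fractions, equipped with an injective ring homomorphism A → B_i making B_i a finitely generated A-module. If there is an A-algebra isomorphism between the localization of B₁ away from the image of f and the localization of B₂ away from the image of f, then there is an A-algebra isomorphism B₁ ≅ B₂. -/
lemma aux_mem (A B C L M : Type*) [CommRing A] [CommRing B] [CommRing C] [IsDomain C]
    [Algebra A B] [Algebra A C] [Module.Finite A B] [IsIntegrallyClosed C]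
    (g : C) (hg : g ≠ 0) [CommRing L] [CommRing M]
    [Algebra B L] [Algebra C M] [Algebra A L] [Algebra A M]
    [IsScalarTower A B L] [IsScalarTower A C M]
    [IsLocalization (Submonoid.powers g) M]
    (φ : L →ₐ[A] M) (b : B) : ∃ y : C, algebraMap C M y = φ (algebraMap B L b) := by
  have hle : Submonoid.powers g ≤ nonZeroDivisors C :=
    powers_le_nonZeroDivisors_of_noZeroDivisors hg
  have hint : IsIntegral A (φ (algebraMap B L b)) :=
    (Algebra.IsIntegral.isIntegral (R := A) b).map (φ.comp (IsScalarTower.toAlgHom A B L))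
  have hintC : IsIntegral C (φ (algebraMap B L b)) := hint.tower_top
  letI : Algebra M (FractionRing C) :=
    IsLocalization.localizationAlgebraOfSubmonoidLe M (FractionRing C) _ _ hle
  haveI : IsScalarTower C M (FractionRing C) :=
    IsLocalization.localization_isScalarTower_of_submonoid_le M (FractionRing C) _ _ hle
  haveI : IsFractionRing M (FractionRing C) :=
    IsFractionRing.isFractionRing_of_isLocalization (Submonoid.powers g) M (FractionRing C) hle
  have hintK : IsIntegral C (algebraMap M (FractionRing C) (φ (algebraMap B L b))) :=
    hintC.map (IsScalarTower.toAlgHom C M (FractionRing C))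
  obtain ⟨y, hy⟩ := IsIntegrallyClosed.isIntegral_iff.mp hintK
  refine ⟨y, IsFractionRing.injective M (FractionRing C) ?_⟩
  rw [← IsScalarTower.algebraMap_apply, hy]

/-- Let `A` be an integral domain and `f ∈ A` nonzero.  For `i = 1, 2`, let `Bᵢ` be an
integral domain, integrally closed in its field of fractions, equipped with an injective
ring homomorphism `A → Bᵢ` making `Bᵢ` a finitely generated `A`-module.  If the
localizations of `B₁` and `B₂` away from (the image of) `f` are isomorphic as
`A`-algebras, then `B₁ ≅ B₂` as `A`-algebras. -/
theorem stmt_0 (A B₁ B₂ : Type*) [CommRing A] [IsDomain A]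
    [CommRing B₁] [IsDomain B₁] [CommRing B₂] [IsDomain B₂]
    [Algebra A B₁] [Algebra A B₂]
    (hinj₁ : Function.Injective (algebraMap A B₁))
    (hinj₂ : Function.Injective (algebraMap A B₂))
    [Module.Finite A B₁] [Module.Finite A B₂]
    [IsIntegrallyClosed B₁] [IsIntegrallyClosed B₂]
    (f : A) (hf : f ≠ 0)
    (L₁ L₂ : Type*) [CommRing L₁] [CommRing L₂]
    [Algebra B₁ L₁] [Algebra B₂ L₂] [Algebra A L₁] [Algebra A L₂]
    [IsScalarTower A B₁ L₁] [IsScalarTower A B₂ L₂]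
    [IsLocalization.Away (algebraMap A B₁ f) L₁]
    [IsLocalization.Away (algebraMap A B₂ f) L₂]
    (e : Nonempty (L₁ ≃ₐ[A] L₂)) :
    Nonempty (B₁ ≃ₐ[A] B₂) := by
  obtain ⟨φ⟩ := e
  have hf₁ : algebraMap A B₁ f ≠ 0 := fun h => hf (hinj₁ (by simpa using h))
  have hf₂ : algebraMap A B₂ f ≠ 0 := fun h => hf (hinj₂ (by simpa using h))
  have hj₁ : Function.Injective (algebraMap B₁ L₁) :=
    IsLocalization.injective L₁ (powers_le_nonZeroDivisors_of_noZeroDivisors hf₁)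
  have hj₂ : Function.Injective (algebraMap B₂ L₂) :=
    IsLocalization.injective L₂ (powers_le_nonZeroDivisors_of_noZeroDivisors hf₂)
  have h12 : ∀ b : B₁, ∃ y : B₂, algebraMap B₂ L₂ y = φ (algebraMap B₁ L₁ b) :=
    aux_mem A B₁ B₂ L₁ L₂ _ hf₂ φ.toAlgHom
  have h21 : ∀ b : B₂, ∃ y : B₁, algebraMap B₁ L₁ y = φ.symm (algebraMap B₂ L₂ b) :=
    aux_mem A B₂ B₁ L₂ L₁ _ hf₁ φ.symm.toAlgHom
  -- build alg homs
  let j₁ : B₁ →ₐ[A] L₁ := IsScalarTower.toAlgHom A B₁ L₁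
  let j₂ : B₂ →ₐ[A] L₂ := IsScalarTower.toAlgHom A B₂ L₂
  let e₂ : B₂ ≃ₐ[A] j₂.range := AlgEquiv.ofInjective j₂ hj₂
  let e₁ : B₁ ≃ₐ[A] j₁.range := AlgEquiv.ofInjective j₁ hj₁
  have hmem₂ : ∀ b : B₁, (φ.toAlgHom.comp j₁) b ∈ j₂.range := by
    intro b; obtain ⟨y, hy⟩ := h12 b; exact ⟨y, hy⟩
  have hmem₁ : ∀ b : B₂, (φ.symm.toAlgHom.comp j₂) b ∈ j₁.range := by
    intro b; obtain ⟨y, hy⟩ := h21 b; exact ⟨y, hy⟩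
  let ψ : B₁ →ₐ[A] B₂ :=
    e₂.symm.toAlgHom.comp ((φ.toAlgHom.comp j₁).codRestrict j₂.range hmem₂)
  let ψ' : B₂ →ₐ[A] B₁ :=
    e₁.symm.toAlgHom.comp ((φ.symm.toAlgHom.comp j₂).codRestrict j₁.range hmem₁)
  have key₂ : ∀ r : j₂.range, j₂ (e₂.symm r) = (r : L₂) := by
    intro r
    have := e₂.apply_symm_apply r
    exact congrArg Subtype.val this
  have key₁ : ∀ r : j₁.range, j₁ (e₁.symm r) = (r : L₁) := by
    intro r
    have := e₁.apply_symm_apply r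
    exact congrArg Subtype.val this
  have hψ : ∀ b : B₁, j₂ (ψ b) = φ (j₁ b) := fun b => key₂ _
  have hψ' : ∀ b : B₂, j₁ (ψ' b) = φ.symm (j₂ b) := fun b => key₁ _
  refine ⟨AlgEquiv.ofAlgHom ψ ψ' ?_ ?_⟩
  · ext b
    apply hj₂
    show j₂ ((ψ.comp ψ') b) = j₂ b
    rw [AlgHom.comp_apply, hψ, hψ', AlgEquiv.apply_symm_apply]
  · ext b
    apply hj₁
    show j₁ ((ψ'.comp ψ) b) = j₁ b
    rw [AlgHom.comp_apply, hψ', hψ, AlgEquiv.symm_apply_apply]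
end

section
/- Let k and N be positive integers and let ρ : Fin N → (Fin k → ℤ) be a family of integer weight vectors. Let the torus T = (ℂˣ)^k act on ℂ^N diagonally by (t • x)_i = (∏_{a} t_a^{ρ i a}) · x_i. Assume that the only function m : Fin N → ℕ with ∑_i (m i) • (ρ i) = 0 in ℤ^k is m = 0. Then for every x ∈ ℂ^N, the origin 0 lies in the closure (for the standard topology on ℂ^N) of the orbit {t • x : t ∈ T}. -/
open Finset

private lemma aux_not_mem_hull (k N : ℕ) (ρ : Fin N → Fin k → ℤ)
    (hinv : ∀ m : Fin N → ℕ, (∑ i, m i • ρ i) = (0 : Fin k → ℤ) → m = 0) :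
    (0 : Fin k → ℝ) ∉ convexHull ℝ (Set.range (fun i a => ((ρ i a : ℝ)))) := by
  classical
  intro h0
  rw [convexHull_eq_union] at h0
  simp only [Set.mem_iUnion] at h0
  obtain ⟨t, hts, hai, hmem⟩ := h0
  rw [Finset.convexHull_eq] at hmem
  obtain ⟨w, hw0, hw1, hwc⟩ := hmem
  rw [Finset.centerMass_eq_of_sum_1 _ _ hw1] at hwc
  -- choose integer representatives
  have hg : ∀ y : {y // y ∈ t}, ∃ i : Fin N, (fun a => ((ρ i a : ℝ))) = (y : Fin k → ℝ) :=
    fun y => hts y.2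
  choose g hgs using hg
  have hcoord : ∀ (y : {y // y ∈ t}) (a : Fin k), (y : Fin k → ℝ) a = (ρ (g y) a : ℝ) := by
    intro y a; rw [← hgs y]
  -- the rational Gram-type matrix
  set M : Matrix {y // y ∈ t} {y // y ∈ t} ℚ :=
    fun u v => ((∑ a, ρ (g u) a * ρ (g v) a : ℤ) : ℚ) + 1 with hM
  set MR : Matrix {y // y ∈ t} {y // y ∈ t} ℝ :=
    fun u v => (∑ a, (u : Fin k → ℝ) a * (v : Fin k → ℝ) a) + 1 with hMR
  have hmap : ∀ u v, MR u v = ((M u v : ℚ) : ℝ) := by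
    intro u v
    simp [hM, hMR, hcoord]
  -- kernel of MR is trivial
  have hker : ∀ z : {y // y ∈ t} → ℝ, MR.mulVec z = 0 → z = 0 := by
    intro z hz
    have hquad : ∑ u, z u * (MR.mulVec z u) = 0 := by
      rw [hz]; simp
    have hexp : ∑ u, z u * (MR.mulVec z u)
        = ∑ a, (∑ u, z u * (u : Fin k → ℝ) a) ^ 2 + (∑ u, z u) ^ 2 := by
      simp only [Matrix.mulVec, dotProduct, hMR]
      calc ∑ u, z u * ∑ v : {y // y ∈ t},
              ((∑ a, (u : Fin k → ℝ) a * (v : Fin k → ℝ) a) + 1) * z v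
          = ∑ u, (∑ v : {y // y ∈ t}, ∑ a,
                (z u * (u : Fin k → ℝ) a) * (z v * (v : Fin k → ℝ) a)
              + ∑ v : {y // y ∈ t}, z u * z v) := by
            refine Finset.sum_congr rfl fun u _ => ?_
            rw [Finset.mul_sum, ← Finset.sum_add_distrib]
            refine Finset.sum_congr rfl fun v _ => ?_
            rw [add_mul, one_mul, mul_add, Finset.sum_mul, Finset.mul_sum]
            congr 1
            exact Finset.sum_congr rfl fun a _ => by ring
        _ = ∑ u, ∑ v : {y // y ∈ t}, ∑ a,
                (z u * (u : Fin k → ℝ) a) * (z v * (v : Fin k → ℝ) a)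
              + ∑ u, ∑ v : {y // y ∈ t}, z u * z v := Finset.sum_add_distrib
        _ = ∑ a, (∑ u, z u * (u : Fin k → ℝ) a) ^ 2 + (∑ u, z u) ^ 2 := by
            congr 1
            · calc ∑ u, ∑ v : {y // y ∈ t}, ∑ a,
                    (z u * (u : Fin k → ℝ) a) * (z v * (v : Fin k → ℝ) a)
                  = ∑ u, ∑ a, ∑ v : {y // y ∈ t},
                    (z u * (u : Fin k → ℝ) a) * (z v * (v : Fin k → ℝ) a) :=
                    Finset.sum_congr rfl fun u _ => Finset.sum_comm
                _ = ∑ a, ∑ u, ∑ v : {y // y ∈ t},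
                    (z u * (u : Fin k → ℝ) a) * (z v * (v : Fin k → ℝ) a) :=
                    Finset.sum_comm
                _ = ∑ a, (∑ u, z u * (u : Fin k → ℝ) a) ^ 2 :=
                    Finset.sum_congr rfl fun a _ => by rw [sq, Finset.sum_mul_sum]
            · rw [sq, Finset.sum_mul_sum]
    rw [hexp] at hquad
    have h1 : 0 ≤ ∑ a, (∑ u, z u * (u : Fin k → ℝ) a) ^ 2 :=
      Finset.sum_nonneg fun a _ => sq_nonneg _
    have h4 : (∑ u, z u) = 0 := by
      have : (∑ u, z u) ^ 2 = 0 := le_antisymm (by linarith) (sq_nonneg _)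
      exact pow_eq_zero_iff two_ne_zero |>.mp this
    have h3 : ∑ a, (∑ u, z u * (u : Fin k → ℝ) a) ^ 2 = 0 := by
      have h2 : 0 ≤ (∑ u, z u) ^ 2 := sq_nonneg _
      linarith
    have hA : ∀ a, (∑ u, z u * (u : Fin k → ℝ) a) = 0 := fun a =>
      pow_eq_zero_iff two_ne_zero |>.mp
        ((Finset.sum_eq_zero_iff_of_nonneg (fun a _ => sq_nonneg _)).mp h3 a (by simp))
    have hz0 : ∀ e ∈ (Finset.univ : Finset {y // y ∈ t}), z e = 0 := by
      refine affineIndependent_iff.1 hai Finset.univ z h4 ?_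
      funext a
      simp only [Finset.sum_apply, Pi.smul_apply, smul_eq_mul, Pi.zero_apply]
      exact hA a
    funext e
    exact hz0 e (Finset.mem_univ e)
  -- determinants
  have hdetR : MR.det ≠ 0 := by
    intro h
    obtain ⟨v, hv, hv0⟩ := Matrix.exists_mulVec_eq_zero_iff.mpr h
    exact hv (hker v hv0)
  have hmapM : MR = M.map (Rat.castHom ℝ) := by
    ext u v; exact hmap u v
  have hdetQ : M.det ≠ 0 := by
    intro h
    apply hdetR
    rw [hmapM, ← RingHom.mapMatrix_apply, ← RingHom.map_det, h]
    simp
  have hMunit : IsUnit M.det := isUnit_iff_ne_zero.2 hdetQ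
  set q : {y // y ∈ t} → ℚ := M⁻¹.mulVec (fun _ => 1) with hqdef
  have hMq : M.mulVec q = fun _ => 1 := by
    rw [hqdef, Matrix.mulVec_mulVec, Matrix.mul_nonsing_inv _ hMunit, Matrix.one_mulVec]
  -- the real weights
  set lam : {y // y ∈ t} → ℝ := fun v => w (v : Fin k → ℝ) with hlamdef
  have hlamsum : ∑ v, lam v = 1 := by
    rw [← hw1]
    exact Finset.sum_coe_sort t w
  have hlamvec : ∀ a, ∑ v, lam v * (v : Fin k → ℝ) a = 0 := by
    intro a
    have h' := congrFun hwc a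
    simp only [Finset.sum_apply, Pi.smul_apply, smul_eq_mul, Pi.zero_apply, id] at h'
    rw [← Finset.sum_coe_sort t (fun i => w i * i a)] at h'
    exact h'
  have hMRlam : MR.mulVec lam = fun _ => 1 := by
    funext u
    simp only [Matrix.mulVec, dotProduct, hMR]
    calc ∑ v : {y // y ∈ t}, ((∑ a, (u : Fin k → ℝ) a * (v : Fin k → ℝ) a) + 1) * lam v
        = ∑ v : {y // y ∈ t}, ((∑ a, (u : Fin k → ℝ) a * ((v : Fin k → ℝ) a * lam v)) + lam v) := by
          refine Finset.sum_congr rfl fun v _ => ?_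
          rw [add_mul, one_mul, Finset.sum_mul]
          congr 1
          exact Finset.sum_congr rfl fun a _ => by ring
      _ = ∑ v : {y // y ∈ t}, ∑ a, (u : Fin k → ℝ) a * ((v : Fin k → ℝ) a * lam v) + ∑ v, lam v :=
          Finset.sum_add_distrib
      _ = ∑ a, (u : Fin k → ℝ) a * ∑ v : {y // y ∈ t}, lam v * (v : Fin k → ℝ) a + ∑ v, lam v := by
          rw [Finset.sum_comm]
          congr 1
          refine Finset.sum_congr rfl fun a _ => ?_
          rw [Finset.mul_sum]
          exact Finset.sum_congr rfl fun v _ => by ring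
      _ = 1 := by
          rw [hlamsum]
          have h0 : ∀ a ∈ (Finset.univ : Finset (Fin k)),
              (u : Fin k → ℝ) a * ∑ v : {y // y ∈ t}, lam v * (v : Fin k → ℝ) a = 0 :=
            fun a _ => by rw [hlamvec a, mul_zero]
          rw [Finset.sum_eq_zero h0, zero_add]
  have hMRq : MR.mulVec (fun v => ((q v : ℚ) : ℝ)) = fun _ => 1 := by
    funext u
    have h1 := congrFun hMq u
    simp only [Matrix.mulVec, dotProduct] at h1 ⊢
    have : ∑ v, MR u v * ((q v : ℚ) : ℝ) = (((∑ v, M u v * q v : ℚ)) : ℝ) := by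
      push_cast
      exact Finset.sum_congr rfl fun v _ => by rw [hmap u v]
    rw [this, h1]
    norm_num
  have hlamq : lam = fun v => ((q v : ℚ) : ℝ) := by
    have hsub : MR.mulVec (lam - fun v => ((q v : ℚ) : ℝ)) = 0 := by
      rw [Matrix.mulVec_sub, hMRlam, hMRq]
      simp
    have := hker _ hsub
    exact sub_eq_zero.mp this
  have hq0 : ∀ v, 0 ≤ q v := by
    intro v
    have : (0 : ℝ) ≤ ((q v : ℚ) : ℝ) := by
      rw [← congrFun hlamq v]
      exact hw0 _ v.2
    exact_mod_cast this
  have hqsum : ∑ v, q v = 1 := by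
    have : ((∑ v, q v : ℚ) : ℝ) = 1 := by
      push_cast
      rw [← hlamsum]
      exact Finset.sum_congr rfl fun v _ => (congrFun hlamq v).symm
    exact_mod_cast this
  have hqrel : ∀ a, ∑ v, q v * (ρ (g v) a : ℚ) = 0 := by
    intro a
    have : ((∑ v, q v * (ρ (g v) a : ℚ) : ℚ) : ℝ) = 0 := by
      push_cast
      rw [← hlamvec a]
      refine Finset.sum_congr rfl fun v _ => ?_
      rw [congrFun hlamq v, hcoord v a]
    exact_mod_cast this
  -- clear denominators
  obtain ⟨v0, hv0⟩ : ∃ v, 0 < q v := by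
    by_contra h
    push_neg at h
    have : (1 : ℚ) ≤ 0 := hqsum ▸ Finset.sum_nonpos fun v _ => h v
    norm_num at this
  set m' : {y // y ∈ t} → ℕ :=
    fun v => (q v).num.toNat * ∏ u ∈ Finset.univ.erase v, (q u).den with hm'
  have hm'cast : ∀ v, (m' v : ℚ) = q v * ∏ u, ((q u).den : ℚ) := by
    intro v
    rw [hm']
    push_cast [Int.toNat_of_nonneg (Rat.num_nonneg.2 (hq0 v))]
    rw [← Finset.prod_erase_mul _ _ (Finset.mem_univ v)]
    rw [show q v * ((∏ u ∈ Finset.univ.erase v, ((q u).den : ℚ)) * ((q v).den : ℚ))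
        = (q v * ((q v).den : ℚ)) * ∏ u ∈ Finset.univ.erase v, ((q u).den : ℚ) by ring]
    rw [Rat.mul_den_eq_num]
    have hnum : (((q v).num.toNat : ℕ) : ℚ) = ((q v).num : ℚ) := by
      exact_mod_cast congrArg (fun z : ℤ => (z : ℚ)) (Int.toNat_of_nonneg (Rat.num_nonneg.2 (hq0 v)))
    rw [hnum]
  set m : Fin N → ℕ := fun j => ∑ v, if g v = j then m' v else 0 with hm
  have hmrel : (∑ i, m i • ρ i) = (0 : Fin k → ℤ) := by
    funext a
    have h5 : (∑ i, m i • ρ i) a = ∑ i, (m i : ℤ) * ρ i a := by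
      simp [Finset.sum_apply]
    rw [h5]
    have hswap : ∑ i, (m i : ℤ) * ρ i a = ∑ v, (m' v : ℤ) * ρ (g v) a := by
      rw [hm]
      calc ∑ i, ((∑ v, if g v = i then m' v else 0 : ℕ) : ℤ) * ρ i a
          = ∑ i, ∑ v, (if g v = i then (m' v : ℤ) * ρ i a else 0) := by
            refine Finset.sum_congr rfl fun i _ => ?_
            push_cast
            rw [Finset.sum_mul]
            exact Finset.sum_congr rfl fun v _ => by split <;> simp
        _ = ∑ v, ∑ i, (if g v = i then (m' v : ℤ) * ρ i a else 0) := Finset.sum_comm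
        _ = ∑ v, (m' v : ℤ) * ρ (g v) a := by
            refine Finset.sum_congr rfl fun v _ => ?_
            simp
    rw [hswap]
    have hQ : ((∑ v, (m' v : ℤ) * ρ (g v) a : ℤ) : ℚ) = 0 := by
      push_cast
      calc ∑ v, (m' v : ℚ) * (ρ (g v) a : ℚ)
          = (∏ u, ((q u).den : ℚ)) * ∑ v, q v * (ρ (g v) a : ℚ) := by
            rw [Finset.mul_sum]
            exact Finset.sum_congr rfl fun v _ => by rw [hm'cast v]; ring
        _ = 0 := by rw [hqrel a, mul_zero]
    exact_mod_cast hQ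
  have hmz := hinv m hmrel
  have hm'pos : 0 < m' v0 := by
    rw [hm']
    apply Nat.mul_pos
    · have : 0 < (q v0).num := Rat.num_pos.2 hv0
      omega
    · exact Finset.prod_pos fun u _ => (q u).pos
  have hle : m' v0 ≤ m (g v0) := by
    rw [hm]
    have := Finset.single_le_sum (f := fun v => if g v = g v0 then m' v else 0)
      (fun v _ => Nat.zero_le _) (Finset.mem_univ v0)
    simpa using this
  rw [hmz] at hle
  simp at hle
  omega


private theorem aux_stmt_1_of_key (k N : ℕ) (hk : 0 < k) (hN : 0 < N)
    (ρ : Fin N → Fin k → ℤ)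
    (key : (0 : Fin k → ℝ) ∉ convexHull ℝ (Set.range (fun i a => ((ρ i a : ℝ)))))
    (x : Fin N → ℂ) :
    (0 : Fin N → ℂ) ∈
      closure {y : Fin N → ℂ |
        ∃ t : Fin k → ℂˣ, ∀ i : Fin N, y i = (∏ a : Fin k, (t a : ℂ) ^ (ρ i a)) * x i} := by
  classical
  set ρR : Fin N → Fin k → ℝ := fun i a => (ρ i a : ℝ) with hρR
  obtain ⟨f, u, hfu, hu0⟩ :=
    geometric_hahn_banach_closed_point (s := convexHull ℝ (Set.range ρR))
      (convex_convexHull ℝ _) ((Set.finite_range ρR).isClosed_convexHull (𝕜 := ℝ)) key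
  have hu : u < 0 := by simpa using hu0
  set c : Fin k → ℝ := fun a => f (fun j => if a = j then (1:ℝ) else 0) with hc
  have hf : ∀ y : Fin k → ℝ, f y = ∑ a, y a * c a := by
    intro y
    conv_lhs => rw [pi_eq_sum_univ y]
    rw [map_sum]
    exact Finset.sum_congr rfl fun a _ => by rw [map_smul]; simp [hc, smul_eq_mul]
  have hd : ∀ i, ∑ a, (ρ i a : ℝ) * c a < u := by
    intro i
    have := hfu _ (subset_convexHull ℝ _ (Set.mem_range_self (f := ρR) i))
    rwa [hf (ρR i)] at this
  have hmem : ∀ n : ℕ, (fun i => ((((n : ℝ) + 1) ^ (∑ a, (ρ i a : ℝ) * c a) : ℝ) : ℂ) * x i)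
      ∈ {y : Fin N → ℂ |
        ∃ t : Fin k → ℂˣ, ∀ i : Fin N, y i = (∏ a : Fin k, (t a : ℂ) ^ (ρ i a)) * x i} := by
    intro n
    have hpos : (0 : ℝ) < (n : ℝ) + 1 := by positivity
    refine ⟨fun a => Units.mk0 (((((n : ℝ) + 1) ^ (c a) : ℝ)) : ℂ)
      (by exact_mod_cast (Real.rpow_pos_of_pos hpos _).ne'), fun i => ?_⟩
    have hprod : (∏ a, (((((n : ℝ) + 1) ^ (c a) : ℝ) : ℂ)) ^ (ρ i a))
        = ((((n : ℝ) + 1) ^ (∑ a, (ρ i a : ℝ) * c a) : ℝ) : ℂ) := by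
      rw [show (∏ a, (((((n : ℝ) + 1) ^ (c a) : ℝ) : ℂ)) ^ (ρ i a))
          = ((∏ a, (((n : ℝ) + 1) ^ (c a)) ^ (ρ i a) : ℝ) : ℂ) by
        rw [Complex.ofReal_prod]
        exact Finset.prod_congr rfl fun a _ => (Complex.ofReal_zpow _ _).symm]
      congr 1
      calc ∏ a, (((n : ℝ) + 1) ^ (c a)) ^ (ρ i a)
          = ∏ a, ((n : ℝ) + 1) ^ (c a * (ρ i a : ℝ)) := by
            refine Finset.prod_congr rfl fun a _ => ?_
            rw [← Real.rpow_intCast ((((n : ℝ) + 1)) ^ (c a)) (ρ i a), ← Real.rpow_mul hpos.le]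
        _ = ((n : ℝ) + 1) ^ (∑ a, c a * (ρ i a : ℝ)) := (Real.rpow_sum_of_pos hpos _ _).symm
        _ = ((n : ℝ) + 1) ^ (∑ a, (ρ i a : ℝ) * c a) := by
            congr 1
            exact Finset.sum_congr rfl fun a _ => mul_comm _ _
    simp only [Units.val_mk0]
    rw [hprod]
  have htend : Filter.Tendsto
      (fun n : ℕ => (fun i => ((((n : ℝ) + 1) ^ (∑ a, (ρ i a : ℝ) * c a) : ℝ) : ℂ) * x i))
      Filter.atTop (nhds (0 : Fin N → ℂ)) := by
    rw [tendsto_pi_nhds]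
    intro i
    have hneg : ∑ a, (ρ i a : ℝ) * c a < 0 := lt_trans (hd i) hu
    have h1 : Filter.Tendsto (fun s : ℝ => s ^ (∑ a, (ρ i a : ℝ) * c a))
        Filter.atTop (nhds 0) := by
      have := tendsto_rpow_neg_atTop (y := -(∑ a, (ρ i a : ℝ) * c a)) (by linarith)
      simpa using this
    have h2 : Filter.Tendsto (fun n : ℕ => ((n : ℝ) + 1)) Filter.atTop Filter.atTop :=
      Filter.tendsto_atTop_add_const_right _ 1 tendsto_natCast_atTop_atTop
    have h3 := h1.comp h2
    have h4 : Filter.Tendsto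
        (fun n : ℕ => (((((n : ℝ) + 1) ^ (∑ a, (ρ i a : ℝ) * c a) : ℝ)) : ℂ))
        Filter.atTop (nhds 0) := by
      have := (Complex.continuous_ofReal.tendsto 0).comp h3
      simpa [Function.comp_def] using this
    simpa using h4.mul_const (x i)
  exact mem_closure_of_tendsto htend (Filter.Eventually.of_forall hmem)


/-- Let `T = (ℂˣ)^k` act diagonally on `ℂ^N` with integer weight vectors `ρ i ∈ ℤ^k`,
i.e. `(t • x) i = (∏ a, t a ^ ρ i a) * x i`.  If the only `m : Fin N → ℕ` with
`∑ i, m i • ρ i = 0` is `m = 0`, then for every `x ∈ ℂ^N` the origin lies in the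
closure (standard topology) of the `T`-orbit of `x`. -/
theorem stmt_1 (k N : ℕ) (hk : 0 < k) (hN : 0 < N)
    (ρ : Fin N → Fin k → ℤ)
    (hinv : ∀ m : Fin N → ℕ, (∑ i, m i • ρ i) = (0 : Fin k → ℤ) → m = 0)
    (x : Fin N → ℂ) :
    (0 : Fin N → ℂ) ∈
      closure {y : Fin N → ℂ |
        ∃ t : Fin k → ℂˣ, ∀ i : Fin N, y i = (∏ a : Fin k, (t a : ℂ) ^ (ρ i a)) * x i} := by
  exact aux_stmt_1_of_key k N hk hN ρ (aux_not_mem_hull k N ρ hinv) x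
end

section
/- Let n be an odd positive integer. For all (i₁,j₁), (i₂,j₂) ∈ S₊(n), the difference (i₂−i₁, j₂−j₁) does not lie in B(n). -/
/-- For an odd positive integer `n`,
`S₊(n) = {(i,j) ∈ ℤ² : 0 ≤ i+j ≤ 2n−1 and |i−j| ≤ (n−1)/2}`. -/
def SplusOdd (n : ℕ) : Set (ℤ × ℤ) :=
  {p | 0 ≤ p.1 + p.2 ∧ p.1 + p.2 ≤ 2 * (n : ℤ) - 1 ∧ |p.1 - p.2| ≤ ((n : ℤ) - 1) / 2}

/-- `B(n) = {(j−i, −n−i) : i,j ∈ ℕ} ∪ {(−n−i, j−i) : i,j ∈ ℕ} ∪ {(−n−i, −n−j) : i,j ∈ ℕ}`. -/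
def Bset (n : ℕ) : Set (ℤ × ℤ) :=
  {p | ∃ i j : ℕ, p = ((j : ℤ) - (i : ℤ), -(n : ℤ) - (i : ℤ))} ∪
  {p | ∃ i j : ℕ, p = (-(n : ℤ) - (i : ℤ), (j : ℤ) - (i : ℤ))} ∪
  {p | ∃ i j : ℕ, p = (-(n : ℤ) - (i : ℤ), -(n : ℤ) - (j : ℤ))}

/-- For odd positive `n` and any `(i₁,j₁), (i₂,j₂) ∈ S₊(n)`, the difference
`(i₂−i₁, j₂−j₁)` does not lie in `B(n)`. -/
theorem stmt_4 (n : ℕ) (hn : Odd n) (hn0 : 0 < n)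
    (p₁ p₂ : ℤ × ℤ) (h₁ : p₁ ∈ SplusOdd n) (h₂ : p₂ ∈ SplusOdd n) :
    (p₂.1 - p₁.1, p₂.2 - p₁.2) ∉ Bset n := by
  obtain ⟨k, hk⟩ := hn
  obtain ⟨hs1, hs1', hd1⟩ := h₁
  obtain ⟨hs2, hs2', hd2⟩ := h₂
  rw [abs_le] at hd1 hd2
  rintro ((⟨i, j, hij⟩ | ⟨i, j, hij⟩) | ⟨i, j, hij⟩) <;>
    · simp only [Prod.mk.injEq] at hij
      omega
end

section
/- Let n be an even positive integer. For all (i₁,j₁), (i₂,j₂) ∈ S₊(n), the difference (i₂−i₁, j₂−j₁) does not lie in B(n). -/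
/-- For an even positive integer `n`,
`S₊(n) = {(i,j) : 0 ≤ i+j < n, |i−j| ≤ n/2} ∪ {(i,j) : n ≤ i+j ≤ 2n−1, |i−j| ≤ n/2 − 1}`. -/
def SplusEven (n : ℕ) : Set (ℤ × ℤ) :=
  {p | (0 ≤ p.1 + p.2 ∧ p.1 + p.2 < (n : ℤ) ∧ |p.1 - p.2| ≤ (n : ℤ) / 2) ∨
       ((n : ℤ) ≤ p.1 + p.2 ∧ p.1 + p.2 ≤ 2 * (n : ℤ) - 1 ∧ |p.1 - p.2| ≤ (n : ℤ) / 2 - 1)}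

/-- For even positive `n` and any `(i₁,j₁), (i₂,j₂) ∈ S₊(n)`, the difference
`(i₂−i₁, j₂−j₁)` does not lie in `B(n)`. -/
theorem stmt_5 (n : ℕ) (hn : Even n) (hn0 : 0 < n)
    (p₁ p₂ : ℤ × ℤ) (h₁ : p₁ ∈ SplusEven n) (h₂ : p₂ ∈ SplusEven n) :
    (p₂.1 - p₁.1, p₂.2 - p₁.2) ∉ Bset n := by
  obtain ⟨k, hk⟩ := hn
  subst hk
  simp only [SplusEven, Set.mem_setOf_eq, abs_le] at h₁ h₂
  intro h
  simp only [Bset, Set.mem_union, Set.mem_setOf_eq, Prod.mk.injEq] at h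
  rcases h with (⟨i, j, ha, hb⟩ | ⟨i, j, ha, hb⟩) | ⟨i, j, ha, hb⟩ <;> omega
end

section
/- Let n be a positive integer and let W ⊆ {(i,j) ∈ ℤ² : 0 ≤ i+j ≤ 2n−1} be a finite nonempty set with σW = W. Let k = max_{(i,j)∈W} |i−j| and assume k > n/2 (i.e. 2k > n). If some (i,j) ∈ W satisfies |i−j| = k and i+j ≥ n, then the set S = {(i,j) ∈ W : j − i = k and i+j ≥ n} is a minimal subset of W and S is good. -/
/-- The partial order on `ℤ²`: `(i,j) ≼ (i′,j′)` iff there exist `l, m ∈ ℕ` with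
`i′ = i + l − m` and `j′ = j − m`. -/
def Prec (p q : ℤ × ℤ) : Prop :=
  ∃ l m : ℕ, q.1 = p.1 + (l : ℤ) - (m : ℤ) ∧ q.2 = p.2 - (m : ℤ)

/-- `σ(i,j) = (j,i)`.  A set `S ⊆ ℤ²` is *good* (for `n`) if
`(⋃_{a=0}^{n} (σS − (a,0))) ∩ S = ∅`. -/
def Good (n : ℕ) (S : Set (ℤ × ℤ)) : Prop :=
  ∀ a : ℕ, a ≤ n → ∀ p ∈ S, ((p.2 - (a : ℤ), p.1) : ℤ × ℤ) ∉ S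

/-- Let `W ⊆ {0 ≤ i+j ≤ 2n−1}` be a finite nonempty σ-symmetric set, `k` the maximal
width `|i−j|` on `W`, with `2k > n`.  If some `(i,j) ∈ W` has `|i−j| = k` and
`i+j ≥ n`, then `S = {(i,j) ∈ W : j−i = k, i+j ≥ n}` is a minimal subset of `W`
and `S` is good. -/
theorem stmt_6 (n : ℕ) (hn : 0 < n)
    (W : Set (ℤ × ℤ)) (hfin : W.Finite) (hne : W.Nonempty)
    (hband : ∀ p ∈ W, 0 ≤ p.1 + p.2 ∧ p.1 + p.2 ≤ 2 * (n : ℤ) - 1)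
    (hσ : ∀ p : ℤ × ℤ, p ∈ W ↔ ((p.2, p.1) : ℤ × ℤ) ∈ W)
    (k : ℤ)
    (hk_ub : ∀ p ∈ W, |p.1 - p.2| ≤ k)
    (hk_mem : ∃ p ∈ W, |p.1 - p.2| = k)
    (hkn : (n : ℤ) < 2 * k)
    (hex : ∃ p ∈ W, |p.1 - p.2| = k ∧ (n : ℤ) ≤ p.1 + p.2) :
    (∀ s ∈ {p ∈ W | p.2 - p.1 = k ∧ (n : ℤ) ≤ p.1 + p.2},
      ∀ w ∈ W, w ∉ {p ∈ W | p.2 - p.1 = k ∧ (n : ℤ) ≤ p.1 + p.2} → ¬ Prec w s) ∧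
    Good n {p ∈ W | p.2 - p.1 = k ∧ (n : ℤ) ≤ p.1 + p.2} := by
  constructor
  · rintro s ⟨hsW, hsk, hsn⟩ w hwW hwS ⟨l, m, h1, h2⟩
    have hwk := hk_ub w hwW
    have h3 := (abs_le.mp hwk).1
    exact hwS ⟨hwW, by omega, by omega⟩
  · rintro a ha p ⟨_, hk1, hn1⟩ ⟨_, hk2, hn2⟩
    simp only at hk2
    omega
end

section
/- Let n be a positive integer and let W ⊆ {(i,j) ∈ ℤ² : 0 ≤ i+j ≤ 2n−1} be a finite nonempty set with σW = W. Let k = max_{(i,j)∈W} |i−j| and assume k > n/2 (i.e. 2k > n). If some (i,j) ∈ W satisfies |i−j| = k and i+j < n, then the set S = {(i,j) ∈ W : i − j = k and i+j < n} is a maximal subset of W, and −S = {(−i,−j) : (i,j) ∈ S} is good. -/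
/-- Let `W ⊆ {0 ≤ i+j ≤ 2n−1}` be a finite nonempty σ-symmetric set, `k` the maximal
width `|i−j|` on `W`, with `2k > n`.  If some `(i,j) ∈ W` has `|i−j| = k` and
`i+j < n`, then `S = {(i,j) ∈ W : i−j = k, i+j < n}` is a maximal subset of `W`
and `−S` is good. -/
theorem stmt_7 (n : ℕ) (hn : 0 < n)
    (W : Set (ℤ × ℤ)) (hfin : W.Finite) (hne : W.Nonempty)
    (hband : ∀ p ∈ W, 0 ≤ p.1 + p.2 ∧ p.1 + p.2 ≤ 2 * (n : ℤ) - 1)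
    (hσ : ∀ p : ℤ × ℤ, p ∈ W ↔ ((p.2, p.1) : ℤ × ℤ) ∈ W)
    (k : ℤ)
    (hk_ub : ∀ p ∈ W, |p.1 - p.2| ≤ k)
    (hk_mem : ∃ p ∈ W, |p.1 - p.2| = k)
    (hkn : (n : ℤ) < 2 * k)
    (hex : ∃ p ∈ W, |p.1 - p.2| = k ∧ p.1 + p.2 < (n : ℤ)) :
    (∀ s ∈ {p ∈ W | p.1 - p.2 = k ∧ p.1 + p.2 < (n : ℤ)},
      ∀ w ∈ W, w ∉ {p ∈ W | p.1 - p.2 = k ∧ p.1 + p.2 < (n : ℤ)} → ¬ Prec s w) ∧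
    Good n ((fun q : ℤ × ℤ => (-q.1, -q.2)) ''
      {p ∈ W | p.1 - p.2 = k ∧ p.1 + p.2 < (n : ℤ)}) := by
  constructor
  · rintro s ⟨hsW, hsk, hss⟩ w hwW hwS ⟨l, m, h1, h2⟩
    have hub := abs_le.mp (hk_ub w hwW)
    have hl : (l : ℤ) = 0 := by omega
    exact hwS ⟨hwW, by omega, by omega⟩
  · rintro a ha p ⟨q, ⟨hqW, hqk, hqs⟩, rfl⟩ ⟨r, ⟨hrW, hrk, hrs⟩, hr⟩
    simp only [Prod.ext_iff] at hr
    have hkn' : (a : ℤ) ≤ n := by exact_mod_cast ha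
    omega
end

section
/- Let n be an even positive integer and let W ⊆ {(i,j) ∈ ℤ² : 0 ≤ i+j ≤ 2n−1} be a finite set with σW = W and |i−j| ≤ n/2 for all (i,j) ∈ W. Then the set S = {(i,j) ∈ W : j − i = n/2 and i+j > n} is a minimal subset of W and S is good. -/
/-- Let `n` be an even positive integer and `W ⊆ {0 ≤ i+j ≤ 2n−1}` a finite
σ-symmetric set with `|i−j| ≤ n/2` on `W`.  Then
`S = {(i,j) ∈ W : j−i = n/2, i+j > n}` is a minimal subset of `W` and is good. -/
theorem stmt_8 (n : ℕ) (hn : 0 < n) (hev : Even n)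
    (W : Set (ℤ × ℤ)) (hfin : W.Finite)
    (hband : ∀ p ∈ W, 0 ≤ p.1 + p.2 ∧ p.1 + p.2 ≤ 2 * (n : ℤ) - 1)
    (hσ : ∀ p : ℤ × ℤ, p ∈ W ↔ ((p.2, p.1) : ℤ × ℤ) ∈ W)
    (hwidth : ∀ p ∈ W, |p.1 - p.2| ≤ (n : ℤ) / 2) :
    (∀ s ∈ {p ∈ W | p.2 - p.1 = (n : ℤ) / 2 ∧ (n : ℤ) < p.1 + p.2},
      ∀ w ∈ W, w ∉ {p ∈ W | p.2 - p.1 = (n : ℤ) / 2 ∧ (n : ℤ) < p.1 + p.2} → ¬ Prec w s) ∧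
    Good n {p ∈ W | p.2 - p.1 = (n : ℤ) / 2 ∧ (n : ℤ) < p.1 + p.2} := by
  constructor
  · rintro s ⟨hsW, hs1, hs2⟩ w hwW hwS ⟨l, m, h1, h2⟩
    have hw := hwidth w hwW
    have habs : |w.1 - w.2| ≤ (n : ℤ) / 2 := hw
    rw [abs_le] at habs
    exact hwS ⟨hwW, by omega, by omega⟩
  · rintro a ha p ⟨hpW, hp1, hp2⟩ ⟨hqW, hq1, hq2⟩
    have hb := hband p hpW
    simp only at hq1 hq2
    omega
end

section
/- Let Q = ℂ[s,t,u,x₁,x₂,y₁,y₂]/(s·x₁ + t·x₂, t·x₁ + u·x₂, s·u − t²), and let d_r, d_l : Q³ → Q³ be the Q-linear maps given by matrix-vector multiplication with the matrices d_r = [[0, y₁, y₂], [x₁, −u, t], [x₂, t, −s]] and d_l = [[0, s·y₁+t·y₂, t·y₁+u·y₂], [0, −x₂·y₂, x₁·y₂], [0, x₂·y₁, −x₁·y₁]] (entries denote the images of the polynomial variables in Q). Then the kernel of d_r equals the range of d_l as Q-submodules of Q³. -/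
set_option maxHeartbeats 1000000

noncomputable section

open MvPolynomial

namespace Stmt9

/-- `ℂ[s,t,u,x₁,x₂,y₁,y₂]`, with variables `0 ↦ s, 1 ↦ t, 2 ↦ u, 3 ↦ x₁, 4 ↦ x₂, 5 ↦ y₁, 6 ↦ y₂`. -/
abbrev P7 : Type := MvPolynomial (Fin 7) ℂ

/-- The ideal `(s·x₁ + t·x₂, t·x₁ + u·x₂, s·u − t²)`. -/
def I : Ideal P7 :=
  Ideal.span {X 0 * X 3 + X 1 * X 4, X 1 * X 3 + X 2 * X 4, X 0 * X 2 - X 1 ^ 2}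

/-- `Q = ℂ[s,t,u,x₁,x₂,y₁,y₂]/(s·x₁ + t·x₂, t·x₁ + u·x₂, s·u − t²)`. -/
abbrev Q : Type := P7 ⧸ I

def s : Q := Ideal.Quotient.mk I (X 0)
def t : Q := Ideal.Quotient.mk I (X 1)
def u : Q := Ideal.Quotient.mk I (X 2)
def x₁ : Q := Ideal.Quotient.mk I (X 3)
def x₂ : Q := Ideal.Quotient.mk I (X 4)
def y₁ : Q := Ideal.Quotient.mk I (X 5)
def y₂ : Q := Ideal.Quotient.mk I (X 6)

abbrev A5 : Type := MvPolynomial (Fin 5) ℂ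

def gens : Fin 7 → A5 := ![X 0 ^ 2, X 0 * X 1, X 1 ^ 2, X 1 * X 2, -(X 0 * X 2), X 3, X 4]

def Φ : P7 →ₐ[ℂ] A5 := aeval gens

lemma Φ_X0 : Φ (X 0) = X 0 ^ 2 := by simp [Φ, gens]
lemma Φ_X1 : Φ (X 1) = X 0 * X 1 := by simp [Φ, gens]
lemma Φ_X2 : Φ (X 2) = X 1 ^ 2 := by simp [Φ, gens]
lemma Φ_X3 : Φ (X 3) = X 1 * X 2 := by simp [Φ, gens]
lemma Φ_X4 : Φ (X 4) = -(X 0 * X 2) := by simp [Φ, gens]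
lemma Φ_X5 : Φ (X 5) = X 3 := by rw [Φ, aeval_X]; rfl
lemma Φ_X6 : Φ (X 6) = X 4 := by rw [Φ, aeval_X]; rfl

lemma I_le_ker : I ≤ RingHom.ker (Φ : P7 →+* A5) := by
  rw [I, Ideal.span_le]
  rintro f (rfl | rfl | rfl) <;>
    simp only [SetLike.mem_coe, RingHom.mem_ker, AlgHom.coe_toRingHom, map_add, map_sub, map_mul,
      map_pow, Φ_X0, Φ_X1, Φ_X2, Φ_X3, Φ_X4] <;> ring

/-- coefficient criterion for divisibility by a variable -/
lemma X_dvd_iff' {n : ℕ} (i : Fin n) (f : MvPolynomial (Fin n) ℂ) :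
    X i ∣ f ↔ ∀ d : Fin n →₀ ℕ, d i = 0 → coeff d f = 0 := by
  rw [X_dvd_iff_modMonomial_eq_zero]
  constructor
  · intro h d hd
    have h2 : ¬ Finsupp.single i 1 ≤ d := by
      rw [Finsupp.single_le_iff]; omega
    have := congrArg (coeff d) h
    rwa [coeff_modMonomial_of_not_le _ h2, coeff_zero] at this
  · intro h
    ext d
    by_cases hle : Finsupp.single i 1 ≤ d
    · rw [coeff_modMonomial_of_le _ hle, coeff_zero]
    · have hd : d i = 0 := by
        have := Finsupp.single_le_iff.not.mp hle
        omega
      rw [coeff_modMonomial_of_not_le _ hle, coeff_zero, h d hd]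


def Gd (d : Fin 5 →₀ ℕ) : Prop := d 2 ≤ d 0 + d 1 ∧ (d 0 + d 1) % 2 = d 2 % 2

def IsGood (f : A5) : Prop := ∀ d ∈ f.support, Gd d

lemma monomial_factor (d e : Fin 5 →₀ ℕ) (c : ℂ) (h : e ≤ d) :
    (monomial d c : A5) = monomial e 1 * monomial (d - e) c := by
  rw [monomial_mul, one_mul, add_tsub_cancel_of_le h]

lemma X_as_monomial (s : Fin 5) : (X s : A5) = monomial (Finsupp.single s 1) 1 := rfl

lemma X_mul_X (s t : Fin 5) :
    (X s * X t : A5) = monomial (Finsupp.single s 1 + Finsupp.single t 1) 1 := by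
  rw [X_as_monomial, X_as_monomial, monomial_mul, one_mul]

lemma X_sq (s : Fin 5) : (X s ^ 2 : A5) = monomial (Finsupp.single s 2) 1 := by
  rw [X_pow_eq_monomial]

lemma le_single_iff {d : Fin 5 →₀ ℕ} {j : Fin 5} {k : ℕ} :
    Finsupp.single j k ≤ d ↔ k ≤ d j := Finsupp.single_le_iff

lemma good_monomial_mem : ∀ (N : ℕ) (d : Fin 5 →₀ ℕ) (c : ℂ),
    d 0 + d 1 + d 2 + d 3 + d 4 ≤ N → Gd d → ∃ p : P7, Φ p = monomial d c := by
  intro N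
  induction N with
  | zero =>
    intro d c hN _
    have hd : d = 0 := by
      ext i; fin_cases i <;> simp <;> omega
    subst hd
    exact ⟨C c, by simp [Φ, algebraMap_eq, monomial_zero']⟩
  | succ N IH =>
    intro d c hN hG
    obtain ⟨hG1, hG2⟩ := hG
    by_cases h3 : d 3 ≠ 0
    · obtain ⟨p, hp⟩ := IH (d - Finsupp.single 3 1) c
        (by simp [Finsupp.tsub_apply, Finsupp.single_apply]; omega)
        (by constructor <;> simp [Finsupp.tsub_apply, Finsupp.single_apply] <;> omega)
      refine ⟨X 5 * p, ?_⟩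
      rw [map_mul, Φ_X5, hp, X_as_monomial, ← monomial_factor]
      rw [le_single_iff]; omega
    by_cases h4 : d 4 ≠ 0
    · obtain ⟨p, hp⟩ := IH (d - Finsupp.single 4 1) c
        (by simp [Finsupp.tsub_apply, Finsupp.single_apply]; omega)
        (by constructor <;> simp [Finsupp.tsub_apply, Finsupp.single_apply] <;> omega)
      refine ⟨X 6 * p, ?_⟩
      rw [map_mul, Φ_X6, hp, X_as_monomial, ← monomial_factor]
      rw [le_single_iff]; omega
    by_cases h2 : d 2 ≠ 0
    · by_cases h0 : d 0 ≠ 0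
      · obtain ⟨p, hp⟩ := IH (d - (Finsupp.single 0 1 + Finsupp.single 2 1)) (-c)
          (by simp [Finsupp.tsub_apply, Finsupp.single_apply, Finsupp.add_apply]; omega)
          (by constructor <;>
            simp [Finsupp.tsub_apply, Finsupp.single_apply, Finsupp.add_apply] <;> omega)
        refine ⟨X 4 * p, ?_⟩
        rw [map_mul, Φ_X4, hp, X_mul_X]
        rw [monomial_factor d (Finsupp.single 0 1 + Finsupp.single 2 1) c
          (by rw [Finsupp.le_def]; intro i; fin_cases i <;>
              simp [Finsupp.single_apply, Finsupp.add_apply] <;> omega)]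
        rw [neg_mul, ← mul_neg, ← map_neg (monomial _), neg_neg]
      · obtain ⟨p, hp⟩ := IH (d - (Finsupp.single 1 1 + Finsupp.single 2 1)) c
          (by simp [Finsupp.tsub_apply, Finsupp.single_apply, Finsupp.add_apply]; omega)
          (by constructor <;>
            simp [Finsupp.tsub_apply, Finsupp.single_apply, Finsupp.add_apply] <;> omega)
        refine ⟨X 3 * p, ?_⟩
        rw [map_mul, Φ_X3, hp, X_mul_X, ← monomial_factor]
        rw [Finsupp.le_def]; intro i; fin_cases i <;>
          simp [Finsupp.single_apply, Finsupp.add_apply] <;> omega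
    -- now d 2 = 0
    by_cases h0 : 2 ≤ d 0
    · obtain ⟨p, hp⟩ := IH (d - Finsupp.single 0 2) c
        (by simp [Finsupp.tsub_apply, Finsupp.single_apply]; omega)
        (by constructor <;> simp [Finsupp.tsub_apply, Finsupp.single_apply] <;> omega)
      refine ⟨X 0 * p, ?_⟩
      rw [map_mul, Φ_X0, hp, X_sq, ← monomial_factor]
      rw [le_single_iff]; omega
    by_cases h0' : d 0 = 1
    · obtain ⟨p, hp⟩ := IH (d - (Finsupp.single 0 1 + Finsupp.single 1 1)) c
        (by simp [Finsupp.tsub_apply, Finsupp.single_apply, Finsupp.add_apply]; omega)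
        (by constructor <;>
          simp [Finsupp.tsub_apply, Finsupp.single_apply, Finsupp.add_apply] <;> omega)
      refine ⟨X 1 * p, ?_⟩
      rw [map_mul, Φ_X1, hp, X_mul_X, ← monomial_factor]
      rw [Finsupp.le_def]; intro i; fin_cases i <;>
        simp [Finsupp.single_apply, Finsupp.add_apply] <;> omega
    by_cases h1 : 2 ≤ d 1
    · obtain ⟨p, hp⟩ := IH (d - Finsupp.single 1 2) c
        (by simp [Finsupp.tsub_apply, Finsupp.single_apply]; omega)
        (by constructor <;> simp [Finsupp.tsub_apply, Finsupp.single_apply] <;> omega)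
      refine ⟨X 2 * p, ?_⟩
      rw [map_mul, Φ_X2, hp, X_sq, ← monomial_factor]
      rw [le_single_iff]; omega
    · -- remaining: d 0 = 0, d 1 ≤ 1, parity forces d 1 = 0, so d = 0
      have hd : d = 0 := by
        ext i; fin_cases i <;> simp <;> push_neg at h3 h4 h2 h0 <;> omega
      subst hd
      exact ⟨C c, by simp [Φ, algebraMap_eq, monomial_zero']⟩

lemma good_mem (f : A5) (h : IsGood f) : ∃ p : P7, Φ p = f := by
  have key : ∀ d ∈ f.support, ∃ p : P7, Φ p = monomial d (coeff d f) := by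
    intro d hd
    exact good_monomial_mem (d 0 + d 1 + d 2 + d 3 + d 4) d _ le_rfl (h d hd)
  choose F hF using key
  refine ⟨∑ d ∈ f.support.attach, F d.1 d.2, ?_⟩
  rw [map_sum]
  conv_rhs => rw [f.as_sum]
  rw [← Finset.sum_attach f.support fun d => (monomial d) (coeff d f)]
  exact Finset.sum_congr rfl fun d _ => hF d.1 d.2


def Std (e : Fin 7 →₀ ℕ) : Prop := (e 0 = 0 ∨ e 3 = 0) ∧ (e 1 = 0 ∨ e 3 = 0) ∧ (e 0 = 0 ∨ e 2 = 0)

lemma Gd_add {a b : Fin 5 →₀ ℕ} (ha : Gd a) (hb : Gd b) : Gd (a + b) := by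
  obtain ⟨h1, h2⟩ := ha; obtain ⟨h3, h4⟩ := hb
  constructor <;> simp only [Finsupp.add_apply] <;> omega

lemma isGood_C (c : ℂ) : IsGood (C c : A5) := by
  intro d hd
  classical
  rw [← monomial_zero', support_monomial] at hd
  split_ifs at hd with h
  · simp at hd
  · rw [Finset.mem_singleton] at hd
    subst hd
    constructor <;> simp

lemma IsGood.add {f g : A5} (hf : IsGood f) (hg : IsGood g) : IsGood (f + g) := by
  intro d hd
  have := MvPolynomial.support_add hd
  rw [Finset.mem_union] at this
  rcases this with h | h
  · exact hf d h
  · exact hg d h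

lemma IsGood.mul {f g : A5} (hf : IsGood f) (hg : IsGood g) : IsGood (f * g) := by
  intro d hd
  have := MvPolynomial.support_mul f g hd
  rw [Finset.mem_add] at this
  obtain ⟨a, ha, b, hb, rfl⟩ := this
  exact Gd_add (hf a ha) (hg b hb)

lemma isGood_monomial (d : Fin 5 →₀ ℕ) (c : ℂ) (h : Gd d) : IsGood (monomial d c) := by
  classical
  intro d' hd'
  rw [support_monomial] at hd'
  split_ifs at hd' with hc
  · simp at hd'
  · rw [Finset.mem_singleton] at hd'
    subst hd'; exact h

lemma isGood_neg {f : A5} (hf : IsGood f) : IsGood (-f) := by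
  intro d hd
  rw [MvPolynomial.support_neg] at hd
  exact hf d hd

lemma X_as_monomial5 (s : Fin 5) : (X s : A5) = monomial (Finsupp.single s 1) 1 := rfl

lemma Φ_X (n : Fin 7) : Φ (X n) = gens n := by rw [Φ, aeval_X]

lemma isGood_gens (i : Fin 7) : IsGood (gens i) := by
  have g0 : IsGood ((X 0 : A5) ^ 2) := by
    rw [X_pow_eq_monomial]
    exact isGood_monomial _ _ (by constructor <;> simp [Finsupp.single_apply])
  have g1 : IsGood ((X 0 : A5) * X 1) := by
    rw [X_as_monomial5, X_as_monomial5, monomial_mul]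
    exact isGood_monomial _ _ (by constructor <;> simp [Finsupp.single_apply])
  have g2 : IsGood ((X 1 : A5) ^ 2) := by
    rw [X_pow_eq_monomial]
    exact isGood_monomial _ _ (by constructor <;> simp [Finsupp.single_apply])
  have g3 : IsGood ((X 1 : A5) * X 2) := by
    rw [X_as_monomial5, X_as_monomial5, monomial_mul]
    exact isGood_monomial _ _ (by constructor <;> simp [Finsupp.single_apply])
  have g4 : IsGood (-((X 0 : A5) * X 2)) := by
    refine isGood_neg ?_
    rw [X_as_monomial5, X_as_monomial5, monomial_mul]
    exact isGood_monomial _ _ (by constructor <;> simp [Finsupp.single_apply])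
  have g5 : IsGood ((X 3 : A5)) := by
    rw [X_as_monomial5]
    exact isGood_monomial _ _ (by constructor <;> simp [Finsupp.single_apply])
  have g6 : IsGood ((X 4 : A5)) := by
    rw [X_as_monomial5]
    exact isGood_monomial _ _ (by constructor <;> simp [Finsupp.single_apply])
  fin_cases i
  · exact g0
  · exact g1
  · exact g2
  · exact g3
  · exact g4
  · exact g5
  · exact g6

lemma isGood_phi (p : P7) : IsGood (Φ p) := by
  induction p using MvPolynomial.induction_on with
  | C c => rw [show Φ (C c) = C c by simp [Φ, algebraMap_eq]]; exact isGood_C c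
  | add p q hp hq => rw [map_add]; exact hp.add hq
  | mul_X p n hp =>
    rw [map_mul, Φ_X]
    exact hp.mul (isGood_gens n)

def ψ (e : Fin 7 →₀ ℕ) : Fin 5 →₀ ℕ :=
  Finsupp.equivFunOnFinite.symm
    ![2 * e 0 + e 1 + e 4, e 1 + 2 * e 2 + e 3, e 3 + e 4, e 5, e 6]

lemma ψ_0 (e : Fin 7 →₀ ℕ) : ψ e 0 = 2 * e 0 + e 1 + e 4 := rfl
lemma ψ_1 (e : Fin 7 →₀ ℕ) : ψ e 1 = e 1 + 2 * e 2 + e 3 := rfl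
lemma ψ_2 (e : Fin 7 →₀ ℕ) : ψ e 2 = e 3 + e 4 := rfl
lemma ψ_3 (e : Fin 7 →₀ ℕ) : ψ e 3 = e 5 := rfl
lemma ψ_4 (e : Fin 7 →₀ ℕ) : ψ e 4 = e 6 := rfl

lemma phi_monomial (e : Fin 7 →₀ ℕ) (c : ℂ) :
    Φ (monomial e c) = monomial (ψ e) ((-1) ^ e 4 * c) := by
  rw [monomial_eq, monomial_eq, map_mul, show Φ (C c) = C c by simp [Φ, algebraMap_eq]]
  rw [Finsupp.prod_fintype _ _ (fun i => pow_zero _),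
    Finsupp.prod_fintype _ _ (fun i => pow_zero _)]
  rw [map_prod]
  simp only [map_pow, Φ_X]
  rw [Fin.prod_univ_seven, Fin.prod_univ_five]
  rw [ψ_0, ψ_1, ψ_2, ψ_3, ψ_4]
  rw [show ∀ a b : ℂ, (C (a * b) : A5) = C a * C b from fun a b => map_mul C a b]
  rw [show ((C ((-1 : ℂ) ^ e 4) : A5)) = (-1 : A5) ^ e 4 by rw [map_pow, map_neg, map_one]]
  show C c * (gens 0 ^ e 0 * gens 1 ^ e 1 * gens 2 ^ e 2 * gens 3 ^ e 3 * gens 4 ^ e 4 *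
      gens 5 ^ e 5 * gens 6 ^ e 6) = _
  rw [show gens 0 = X 0 ^ 2 from rfl, show gens 1 = X 0 * X 1 from rfl,
      show gens 2 = X 1 ^ 2 from rfl, show gens 3 = X 1 * X 2 from rfl,
      show gens 4 = -(X 0 * X 2) from rfl, show gens 5 = X 3 from rfl,
      show gens 6 = X 4 from rfl]
  ring

lemma psi_inj {e e' : Fin 7 →₀ ℕ} (he : Std e) (he' : Std e') (h : ψ e = ψ e') : e = e' := by
  have h0 : 2 * e 0 + e 1 + e 4 = 2 * e' 0 + e' 1 + e' 4 := by rw [← ψ_0, ← ψ_0, h]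
  have h1 : e 1 + 2 * e 2 + e 3 = e' 1 + 2 * e' 2 + e' 3 := by rw [← ψ_1, ← ψ_1, h]
  have h2 : e 3 + e 4 = e' 3 + e' 4 := by rw [← ψ_2, ← ψ_2, h]
  have h3 : e 5 = e' 5 := by rw [← ψ_3, ← ψ_3, h]
  have h4 : e 6 = e' 6 := by rw [← ψ_4, ← ψ_4, h]
  obtain ⟨a1, a2, a3⟩ := he
  obtain ⟨b1, b2, b3⟩ := he'
  have key : e 0 = e' 0 ∧ e 1 = e' 1 ∧ e 2 = e' 2 ∧ e 3 = e' 3 ∧ e 4 = e' 4 := by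
    rcases a1 with a1 | a1 <;> rcases a2 with a2 | a2 <;> rcases a3 with a3 | a3 <;>
      rcases b1 with b1 | b1 <;> rcases b2 with b2 | b2 <;> rcases b3 with b3 | b3 <;> omega
  obtain ⟨k0, k1, k2, k3, k4⟩ := key
  ext i
  fin_cases i <;> assumption


lemma mem_I_g1 : (X 0 * X 3 + X 1 * X 4 : P7) ∈ I := Ideal.subset_span (by left; rfl)
lemma mem_I_g2 : (X 1 * X 3 + X 2 * X 4 : P7) ∈ I := Ideal.subset_span (by right; left; rfl)
lemma mem_I_g3 : (X 0 * X 2 - X 1 ^ 2 : P7) ∈ I := Ideal.subset_span (by right; right; rfl)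

lemma X_as_monomial7 (s : Fin 7) : (X s : P7) = monomial (Finsupp.single s 1) 1 := rfl

lemma XmulX (a b : Fin 7) :
    (X a * X b : P7) = monomial (Finsupp.single a 1 + Finsupp.single b 1) 1 := by
  rw [X_as_monomial7, X_as_monomial7, monomial_mul, one_mul]

lemma std_monomial {e : Fin 7 →₀ ℕ} (c : ℂ) (h : Std e) :
    ∀ e' ∈ (monomial e c : P7).support, Std e' := by
  classical
  intro e' he'
  rw [support_monomial] at he'
  split_ifs at he' with hc
  · simp at he'
  · rw [Finset.mem_singleton] at he'; subst he'; exact h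

lemma nf_monomial (W : ℕ) : ∀ (μ : ℕ) (e : Fin 7 →₀ ℕ) (c : ℂ),
    e 0 + e 1 + e 2 + e 3 + e 4 ≤ W → e 0 * (W + 1) + e 1 ≤ μ →
    ∃ g : P7, (∀ e' ∈ g.support, Std e') ∧ monomial e c - g ∈ I := by
  intro μ
  induction μ with
  | zero =>
    intro e c hW hμ
    have h00 : e 0 * (W + 1) = 0 := by omega
    have h01 : e 0 = 0 := by
      rcases Nat.mul_eq_zero.mp h00 with h | h
      · exact h
      · omega
    exact ⟨monomial e c, std_monomial c ⟨Or.inl h01, Or.inl (by omega), Or.inl h01⟩, by simp⟩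
  | succ μ IH =>
    intro e c hW hμ
    by_cases hc1 : e 0 ≠ 0 ∧ e 3 ≠ 0
    · set f := e - (Finsupp.single 0 1 + Finsupp.single 3 1) with hfdef
      have hle : Finsupp.single 0 1 + Finsupp.single 3 1 ≤ e := by
        rw [Finsupp.le_def]; intro i; fin_cases i <;>
          simp [Finsupp.add_apply, Finsupp.single_apply] <;> omega
      have hf : ∀ i, f i = e i - ((Finsupp.single 0 1 : Fin 7 →₀ ℕ) i +
          (Finsupp.single 3 1 : Fin 7 →₀ ℕ) i) := by
        intro i; rw [hfdef, Finsupp.tsub_apply, Finsupp.add_apply]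
      have hf0 : f 0 = e 0 - 1 := by rw [hf 0]; simp [Finsupp.single_apply] <;> omega
      have hf1 : f 1 = e 1 := by rw [hf 1]; simp [Finsupp.single_apply] <;> omega
      have hf2 : f 2 = e 2 := by rw [hf 2]; simp [Finsupp.single_apply] <;> omega
      have hf3 : f 3 = e 3 - 1 := by rw [hf 3]; simp [Finsupp.single_apply] <;> omega
      have hf4 : f 4 = e 4 := by rw [hf 4]; simp [Finsupp.single_apply] <;> omega
      set e' := Finsupp.single 1 1 + Finsupp.single 4 1 + f with he'def
      have he' : ∀ i, e' i = (Finsupp.single 1 1 : Fin 7 →₀ ℕ) i +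
          (Finsupp.single 4 1 : Fin 7 →₀ ℕ) i + f i := by
        intro i; rw [he'def, Finsupp.add_apply, Finsupp.add_apply]
      have hd0 : e' 0 = f 0 := by rw [he' 0]; simp [Finsupp.single_apply] <;> omega
      have hd1 : e' 1 = f 1 + 1 := by rw [he' 1]; simp [Finsupp.single_apply] <;> omega
      have hd2 : e' 2 = f 2 := by rw [he' 2]; simp [Finsupp.single_apply] <;> omega
      have hd3 : e' 3 = f 3 := by rw [he' 3]; simp [Finsupp.single_apply] <;> omega
      have hd4 : e' 4 = f 4 + 1 := by rw [he' 4]; simp [Finsupp.single_apply] <;> omega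
      obtain ⟨k, hk⟩ : ∃ k, e 0 = k + 1 := ⟨e 0 - 1, by omega⟩
      have hsplit : e 0 * (W + 1) = k * (W + 1) + (W + 1) := by rw [hk]; ring
      obtain ⟨g, hg, hgI⟩ := IH e' (-c) (by omega)
        (by have h1 : e' 0 = k := by omega
            have h2 : e' 1 = e 1 + 1 := by omega
            rw [h1, h2]; omega)
      refine ⟨g, hg, ?_⟩
      have key : (monomial e c : P7) + monomial e' c =
          (X 0 * X 3 + X 1 * X 4) * monomial f c := by
        rw [add_mul, XmulX, XmulX, monomial_mul, monomial_mul, one_mul, hfdef,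
          add_tsub_cancel_of_le hle, he'def]
      have hrw : (monomial e c : P7) - g =
          ((X 0 * X 3 + X 1 * X 4) * monomial f c) + (monomial e' (-c) - g) := by
        rw [← key, map_neg (monomial e')]; ring
      rw [hrw]
      exact Ideal.add_mem _ (Ideal.mul_mem_right _ _ mem_I_g1) hgI
    · by_cases hc2 : e 1 ≠ 0 ∧ e 3 ≠ 0
      · set f := e - (Finsupp.single 1 1 + Finsupp.single 3 1) with hfdef
        have hle : Finsupp.single 1 1 + Finsupp.single 3 1 ≤ e := by
          rw [Finsupp.le_def]; intro i; fin_cases i <;>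
            simp [Finsupp.add_apply, Finsupp.single_apply] <;> omega
        have hf : ∀ i, f i = e i - ((Finsupp.single 1 1 : Fin 7 →₀ ℕ) i +
            (Finsupp.single 3 1 : Fin 7 →₀ ℕ) i) := by
          intro i; rw [hfdef, Finsupp.tsub_apply, Finsupp.add_apply]
        have hf0 : f 0 = e 0 := by rw [hf 0]; simp [Finsupp.single_apply] <;> omega
        have hf1 : f 1 = e 1 - 1 := by rw [hf 1]; simp [Finsupp.single_apply] <;> omega
        have hf2 : f 2 = e 2 := by rw [hf 2]; simp [Finsupp.single_apply] <;> omega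
        have hf3 : f 3 = e 3 - 1 := by rw [hf 3]; simp [Finsupp.single_apply] <;> omega
        have hf4 : f 4 = e 4 := by rw [hf 4]; simp [Finsupp.single_apply] <;> omega
        set e' := Finsupp.single 2 1 + Finsupp.single 4 1 + f with he'def
        have he' : ∀ i, e' i = (Finsupp.single 2 1 : Fin 7 →₀ ℕ) i +
            (Finsupp.single 4 1 : Fin 7 →₀ ℕ) i + f i := by
          intro i; rw [he'def, Finsupp.add_apply, Finsupp.add_apply]
        have hd0 : e' 0 = f 0 := by rw [he' 0]; simp [Finsupp.single_apply] <;> omega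
        have hd1 : e' 1 = f 1 := by rw [he' 1]; simp [Finsupp.single_apply] <;> omega
        have hd2 : e' 2 = f 2 + 1 := by rw [he' 2]; simp [Finsupp.single_apply] <;> omega
        have hd3 : e' 3 = f 3 := by rw [he' 3]; simp [Finsupp.single_apply] <;> omega
        have hd4 : e' 4 = f 4 + 1 := by rw [he' 4]; simp [Finsupp.single_apply] <;> omega
        obtain ⟨g, hg, hgI⟩ := IH e' (-c) (by omega)
          (by have h1 : e' 0 = e 0 := by omega
              have h2 : e' 1 = e 1 - 1 := by omega
              rw [h1, h2]; omega)
        refine ⟨g, hg, ?_⟩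
        have key : (monomial e c : P7) + monomial e' c =
            (X 1 * X 3 + X 2 * X 4) * monomial f c := by
          rw [add_mul, XmulX, XmulX, monomial_mul, monomial_mul, one_mul, hfdef,
            add_tsub_cancel_of_le hle, he'def]
        have hrw : (monomial e c : P7) - g =
            ((X 1 * X 3 + X 2 * X 4) * monomial f c) + (monomial e' (-c) - g) := by
          rw [← key, map_neg (monomial e')]; ring
        rw [hrw]
        exact Ideal.add_mem _ (Ideal.mul_mem_right _ _ mem_I_g2) hgI
      · by_cases hc3 : e 0 ≠ 0 ∧ e 2 ≠ 0
        · set f := e - (Finsupp.single 0 1 + Finsupp.single 2 1) with hfdef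
          have hle : Finsupp.single 0 1 + Finsupp.single 2 1 ≤ e := by
            rw [Finsupp.le_def]; intro i; fin_cases i <;>
              simp [Finsupp.add_apply, Finsupp.single_apply] <;> omega
          have hf : ∀ i, f i = e i - ((Finsupp.single 0 1 : Fin 7 →₀ ℕ) i +
              (Finsupp.single 2 1 : Fin 7 →₀ ℕ) i) := by
            intro i; rw [hfdef, Finsupp.tsub_apply, Finsupp.add_apply]
          have hf0 : f 0 = e 0 - 1 := by rw [hf 0]; simp [Finsupp.single_apply] <;> omega
          have hf1 : f 1 = e 1 := by rw [hf 1]; simp [Finsupp.single_apply] <;> omega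
          have hf2 : f 2 = e 2 - 1 := by rw [hf 2]; simp [Finsupp.single_apply] <;> omega
          have hf3 : f 3 = e 3 := by rw [hf 3]; simp [Finsupp.single_apply] <;> omega
          have hf4 : f 4 = e 4 := by rw [hf 4]; simp [Finsupp.single_apply] <;> omega
          set e' := Finsupp.single 1 2 + f with he'def
          have he' : ∀ i, e' i = (Finsupp.single 1 2 : Fin 7 →₀ ℕ) i + f i := by
            intro i; rw [he'def, Finsupp.add_apply]
          have hd0 : e' 0 = f 0 := by rw [he' 0]; simp [Finsupp.single_apply] <;> omega
          have hd1 : e' 1 = f 1 + 2 := by rw [he' 1]; simp [Finsupp.single_apply] <;> omega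
          have hd2 : e' 2 = f 2 := by rw [he' 2]; simp [Finsupp.single_apply] <;> omega
          have hd3 : e' 3 = f 3 := by rw [he' 3]; simp [Finsupp.single_apply] <;> omega
          have hd4 : e' 4 = f 4 := by rw [he' 4]; simp [Finsupp.single_apply] <;> omega
          obtain ⟨k, hk⟩ : ∃ k, e 0 = k + 1 := ⟨e 0 - 1, by omega⟩
          have hsplit : e 0 * (W + 1) = k * (W + 1) + (W + 1) := by rw [hk]; ring
          obtain ⟨g, hg, hgI⟩ := IH e' c (by omega)
            (by have h1 : e' 0 = k := by omega
                have h2 : e' 1 = e 1 + 2 := by omega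
                rw [h1, h2]; omega)
          refine ⟨g, hg, ?_⟩
          have key : (monomial e c : P7) - monomial e' c =
              (X 0 * X 2 - X 1 ^ 2) * monomial f c := by
            rw [sub_mul, XmulX, X_pow_eq_monomial, monomial_mul, monomial_mul, one_mul,
              hfdef, add_tsub_cancel_of_le hle, he'def]
          have hrw : (monomial e c : P7) - g =
              ((X 0 * X 2 - X 1 ^ 2) * monomial f c) + (monomial e' c - g) := by
            rw [← key]; ring
          rw [hrw]
          exact Ideal.add_mem _ (Ideal.mul_mem_right _ _ mem_I_g3) hgI
        · push_neg at hc1 hc2 hc3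
          refine ⟨monomial e c, std_monomial c ⟨?_, ?_, ?_⟩, by simp⟩
          · by_cases h : e 0 = 0
            · exact Or.inl h
            · exact Or.inr (hc1 h)
          · by_cases h : e 1 = 0
            · exact Or.inl h
            · exact Or.inr (hc2 h)
          · by_cases h : e 0 = 0
            · exact Or.inl h
            · exact Or.inr (hc3 h)

lemma nf_exists (f : P7) : ∃ g : P7, (∀ e ∈ g.support, Std e) ∧ f - g ∈ I := by
  induction f using MvPolynomial.induction_on' with
  | monomial e c =>
    exact nf_monomial (e 0 + e 1 + e 2 + e 3 + e 4)
      (e 0 * ((e 0 + e 1 + e 2 + e 3 + e 4) + 1) + e 1) e c le_rfl le_rfl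
  | add p q hp hq =>
    obtain ⟨g1, hg1, hg1I⟩ := hp
    obtain ⟨g2, hg2, hg2I⟩ := hq
    refine ⟨g1 + g2, ?_, ?_⟩
    · intro e he
      have := MvPolynomial.support_add he
      rw [Finset.mem_union] at this
      rcases this with h | h
      · exact hg1 e h
      · exact hg2 e h
    · have h : p + q - (g1 + g2) = (p - g1) + (q - g2) := by ring
      rw [h]
      exact Ideal.add_mem _ hg1I hg2I



lemma phi_eq_zero_of_mem {f : P7} (hf : f ∈ I) : Φ f = 0 := I_le_ker hf

lemma ker_le_I (f : P7) (hf : Φ f = 0) : f ∈ I := by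
  obtain ⟨g, hgstd, hgI⟩ := nf_exists f
  have hg0 : Φ g = 0 := by
    have h1 : Φ (f - g) = 0 := phi_eq_zero_of_mem hgI
    rw [map_sub, hf, zero_sub, neg_eq_zero] at h1
    exact h1
  have hgzero : g = 0 := by
    by_contra hne
    obtain ⟨e₀, he₀⟩ := MvPolynomial.ne_zero_iff.mp hne
    have he₀s : e₀ ∈ g.support := mem_support_iff.mpr he₀
    have hc := congrArg (coeff (ψ e₀)) hg0
    rw [coeff_zero] at hc
    conv at hc => lhs; rw [g.as_sum]
    rw [map_sum] at hc
    simp_rw [phi_monomial] at hc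
    rw [coeff_sum, Finset.sum_eq_single e₀] at hc
    · rw [coeff_monomial, if_pos rfl] at hc
      rcases mul_eq_zero.mp hc with h | h
      · exact absurd h (pow_ne_zero _ (by norm_num))
      · exact he₀ h
    · intro b hb hbne
      rw [coeff_monomial, if_neg]
      intro heq
      exact hbne (psi_inj (hgstd b hb) (hgstd e₀ he₀s) heq)
    · intro h
      exact absurd he₀s h
  rw [hgzero, sub_zero] at hgI
  exact hgI


/-- `d_r = [[0, y₁, y₂], [x₁, −u, t], [x₂, t, −s]]` acting by matrix-vector multiplication. -/
def dr : (Fin 3 → Q) →ₗ[Q] (Fin 3 → Q) :=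
  Matrix.mulVecLin !![0, y₁, y₂; x₁, -u, t; x₂, t, -s]

/-- `d_l = [[0, s·y₁+t·y₂, t·y₁+u·y₂], [0, −x₂·y₂, x₁·y₂], [0, x₂·y₁, −x₁·y₁]]`. -/
def dl : (Fin 3 → Q) →ₗ[Q] (Fin 3 → Q) :=
  Matrix.mulVecLin
    !![0, s * y₁ + t * y₂, t * y₁ + u * y₂; 0, -(x₂ * y₂), x₁ * y₂; 0, x₂ * y₁, -(x₁ * y₁)]

def F : Q →+* A5 :=
  Ideal.Quotient.lift I (Φ : P7 →+* A5) fun _ ha => phi_eq_zero_of_mem ha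

lemma F_mk (p : P7) : F (Ideal.Quotient.mk I p) = Φ p := rfl

lemma F_inj : Function.Injective F := by
  intro a b hab
  obtain ⟨p, rfl⟩ := Ideal.Quotient.mk_surjective a
  obtain ⟨q, rfl⟩ := Ideal.Quotient.mk_surjective b
  rw [F_mk, F_mk] at hab
  rw [Ideal.Quotient.eq]
  exact ker_le_I _ (by rw [map_sub, hab, sub_self])

lemma F_s : F s = X 0 ^ 2 := Φ_X0
lemma F_t : F t = X 0 * X 1 := Φ_X1
lemma F_u : F u = X 1 ^ 2 := Φ_X2
lemma F_x₁ : F x₁ = X 1 * X 2 := Φ_X3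
lemma F_x₂ : F x₂ = -(X 0 * X 2) := Φ_X4
lemma F_y₁ : F y₁ = X 3 := Φ_X5
lemma F_y₂ : F y₂ = X 4 := Φ_X6

lemma rel1 : s * x₁ + t * x₂ = 0 := by
  rw [s, x₁, t, x₂, ← map_mul, ← map_mul, ← map_add]
  exact Ideal.Quotient.eq_zero_iff_mem.mpr mem_I_g1

lemma rel2 : t * x₁ + u * x₂ = 0 := by
  rw [t, x₁, u, x₂, ← map_mul, ← map_mul, ← map_add]
  exact Ideal.Quotient.eq_zero_iff_mem.mpr mem_I_g2

lemma easy_dir : LinearMap.range dl ≤ LinearMap.ker dr := by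
  rintro _ ⟨w, rfl⟩
  rw [LinearMap.mem_ker, dr, dl]
  have hcomp := DFunLike.congr_fun
    (Matrix.mulVecLin_mul !![(0:Q), y₁, y₂; x₁, -u, t; x₂, t, -s]
      !![0, s * y₁ + t * y₂, t * y₁ + u * y₂; 0, -(x₂ * y₂), x₁ * y₂; 0, x₂ * y₁, -(x₁ * y₁)]) w
  rw [LinearMap.comp_apply] at hcomp
  rw [← hcomp]
  have hM : (!![0, y₁, y₂; x₁, -u, t; x₂, t, -s] *
      !![0, s * y₁ + t * y₂, t * y₁ + u * y₂; 0, -(x₂ * y₂), x₁ * y₂; 0, x₂ * y₁, -(x₁ * y₁)])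
      = (0 : Matrix (Fin 3) (Fin 3) Q) := by
    ext i j
    fin_cases i <;> fin_cases j <;>
      simp [Matrix.mul_apply, Fin.sum_univ_three] <;>
      first
        | ring1
        | linear_combination y₁ * rel1 + y₂ * rel2
  rw [hM, Matrix.mulVecLin_zero, LinearMap.zero_apply]


lemma hard_dir : LinearMap.ker dr ≤ LinearMap.range dl := by
  intro v hv
  have hv' : dr v = 0 := hv
  have h0 : y₁ * v 1 + y₂ * v 2 = 0 := by
    have h := congrFun hv' 0
    simpa [dr, Matrix.mulVecLin_apply, Matrix.mulVec, dotProduct,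
      Fin.sum_univ_three] using h
  have h1 : x₁ * v 0 - u * v 1 + t * v 2 = 0 := by
    have h := congrFun hv' 1
    have h' : x₁ * v 0 + -u * v 1 + t * v 2 = 0 := by
      simpa [dr, Matrix.mulVecLin_apply, Matrix.mulVec, dotProduct,
        Fin.sum_univ_three] using h
    linear_combination h'
  -- mapped equations
  have hE0 : X 3 * F (v 1) + X 4 * F (v 2) = 0 := by
    have h := congrArg F h0
    simp only [RingHom.map_add, RingHom.map_mul, RingHom.map_zero, F_y₁, F_y₂] at h
    exact h
  have hE1 : (X 1 * X 2) * F (v 0) - X 1 ^ 2 * F (v 1) + (X 0 * X 1) * F (v 2) = 0 := by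
    have h := congrArg F h1
    simp only [RingHom.map_add, RingHom.map_sub, RingHom.map_mul, RingHom.map_zero,
      F_x₁, F_u, F_t] at h
    exact h
  have hkey : X 2 * F (v 0) - X 1 * F (v 1) + X 0 * F (v 2) = 0 := by
    have hfac : X 1 * (X 2 * F (v 0) - X 1 * F (v 1) + X 0 * F (v 2)) = 0 := by
      linear_combination hE1
    rcases mul_eq_zero.mp hfac with h | h
    · exact absurd h (X_ne_zero 1)
    · exact h
  -- Step 1 : X 4 ∣ F (v 1)
  have hdvdB : X 4 ∣ F (v 1) := by
    rw [X_dvd_iff']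
    intro d hd
    have hc1 : coeff (Finsupp.single 3 1 + d) (X 3 * F (v 1)) = coeff d (F (v 1)) :=
      coeff_X_mul _ _ _
    have hc2 : coeff (Finsupp.single 3 1 + d) (X 4 * F (v 2)) = 0 := by
      refine (X_dvd_iff' 4 (X 4 * F (v 2))).mp (dvd_mul_right _ _) _ ?_
      rw [Finsupp.add_apply]
      simp [Finsupp.single_apply, hd]
    have hc3 := congrArg (coeff (Finsupp.single 3 1 + d)) hE0
    rw [coeff_add, hc1, hc2, coeff_zero, add_zero] at hc3
    exact hc3
  obtain ⟨k, hk⟩ := hdvdB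
  -- Step 2 : F (v 2) = -(X 3 * k)
  have hCc : F (v 2) = -(X 3 * k) := by
    have hfac2 : X 4 * (X 3 * k + F (v 2)) = 0 := by
      rw [hk] at hE0
      linear_combination hE0
    rcases mul_eq_zero.mp hfac2 with h | h
    · exact absurd h (X_ne_zero 4)
    · linear_combination h
  have key2 : X 2 * F (v 0) = (X 0 * X 3 + X 1 * X 4) * k := by
    rw [hk, hCc] at hkey
    linear_combination hkey
  -- Step 3 : X 2 ∣ k
  have hdvdk : X 2 ∣ k := by
    rw [X_dvd_iff']
    suffices H : ∀ n : ℕ, ∀ d : Fin 5 →₀ ℕ, d 1 ≤ n → d 2 = 0 → coeff d k = 0 by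
      intro d hd
      exact H (d 1) d le_rfl hd
    have main : ∀ d : Fin 5 →₀ ℕ, d 2 = 0 →
        coeff d k + coeff (Finsupp.single 0 1 + (Finsupp.single 3 1 + d))
          (X 1 * (X 4 * k)) = 0 := by
      intro d hd2
      have cL : coeff (Finsupp.single 0 1 + (Finsupp.single 3 1 + d)) (X 2 * F (v 0)) = 0 := by
        refine (X_dvd_iff' 2 _).mp (dvd_mul_right _ _) _ ?_
        rw [Finsupp.add_apply, Finsupp.add_apply]
        simp [Finsupp.single_apply, hd2]
      have hsp : (X 0 * X 3 + X 1 * X 4) * k = X 0 * (X 3 * k) + X 1 * (X 4 * k) := by ring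
      have cR := congrArg (coeff (Finsupp.single 0 1 + (Finsupp.single 3 1 + d))) key2
      rw [cL, hsp, coeff_add, coeff_X_mul, coeff_X_mul] at cR
      linear_combination -cR
    intro n
    induction n with
    | zero =>
      intro d hd1 hd2
      have hm := main d hd2
      have hT : coeff (Finsupp.single 0 1 + (Finsupp.single 3 1 + d)) (X 1 * (X 4 * k)) = 0 := by
        rw [coeff_X_mul']
        rw [if_neg]
        rw [Finsupp.mem_support_iff]
        push_neg
        rw [Finsupp.add_apply, Finsupp.add_apply]
        simp [Finsupp.single_apply]
        omega
      rw [hT, add_zero] at hm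
      exact hm
    | succ n IH =>
      intro d hd1 hd2
      have hm := main d hd2
      by_cases hd1' : d 1 = 0
      · have hT : coeff (Finsupp.single 0 1 + (Finsupp.single 3 1 + d)) (X 1 * (X 4 * k)) = 0 := by
          rw [coeff_X_mul', if_neg]
          rw [Finsupp.mem_support_iff]
          push_neg
          rw [Finsupp.add_apply, Finsupp.add_apply]
          simp [Finsupp.single_apply]
          omega
        rw [hT, add_zero] at hm
        exact hm
      · by_cases hd4 : d 4 = 0
        · have hT : coeff (Finsupp.single 0 1 + (Finsupp.single 3 1 + d))
              (X 1 * (X 4 * k)) = 0 := by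
            rw [coeff_X_mul', if_pos, ]
            · refine (X_dvd_iff' 4 (X 4 * k)).mp (dvd_mul_right _ _) _ ?_
              rw [Finsupp.tsub_apply, Finsupp.add_apply, Finsupp.add_apply]
              simp [Finsupp.single_apply, hd4]
            · rw [Finsupp.mem_support_iff, Finsupp.add_apply, Finsupp.add_apply]
              simp [Finsupp.single_apply]
              omega
          rw [hT, add_zero] at hm
          exact hm
        · -- d 1 ≥ 1 and d 4 ≥ 1
          set m := (Finsupp.single 0 1 + (Finsupp.single 3 1 + d))
              - Finsupp.single 1 1 - Finsupp.single 4 1 with hmdef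
          have hmv : ∀ i, m i = (Finsupp.single 0 1 : Fin 5 →₀ ℕ) i +
              ((Finsupp.single 3 1 : Fin 5 →₀ ℕ) i + d i) -
              (Finsupp.single 1 1 : Fin 5 →₀ ℕ) i - (Finsupp.single 4 1 : Fin 5 →₀ ℕ) i := by
            intro i
            rw [hmdef, Finsupp.tsub_apply, Finsupp.tsub_apply, Finsupp.add_apply,
              Finsupp.add_apply]
          have hm1 : m 1 = d 1 - 1 := by rw [hmv 1]; simp [Finsupp.single_apply]
          have hm2 : m 2 = 0 := by rw [hmv 2]; simp [Finsupp.single_apply]; omega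
          have hrec : (Finsupp.single 0 1 + (Finsupp.single 3 1 + d)) - Finsupp.single 1 1
              = Finsupp.single 4 1 + m := by
            ext i
            rw [Finsupp.tsub_apply, Finsupp.add_apply, Finsupp.add_apply, Finsupp.add_apply,
              hmv i]
            fin_cases i <;> simp [Finsupp.single_apply] <;> omega
          have hT : coeff (Finsupp.single 0 1 + (Finsupp.single 3 1 + d)) (X 1 * (X 4 * k))
              = coeff m k := by
            rw [coeff_X_mul', if_pos, hrec, coeff_X_mul]
            rw [Finsupp.mem_support_iff, Finsupp.add_apply, Finsupp.add_apply]
            simp [Finsupp.single_apply]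
            omega
          rw [hT] at hm
          have hz := IH m (by omega) hm2
          rw [hz, add_zero] at hm
          exact hm
  obtain ⟨h, hh⟩ := hdvdk
  have hA : F (v 0) = (X 0 * X 3 + X 1 * X 4) * h := by
    have hfac3 : X 2 * (F (v 0) - (X 0 * X 3 + X 1 * X 4) * h) = 0 := by
      rw [hh] at key2
      linear_combination key2
    rcases mul_eq_zero.mp hfac3 with hz | hz
    · exact absurd hz (X_ne_zero 2)
    · linear_combination hz
  have hBgood : IsGood (F (v 1)) := by
    obtain ⟨pb, hpb⟩ := Ideal.Quotient.mk_surjective (v 1)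
    rw [← hpb, F_mk]
    exact isGood_phi pb
  have hAg : ∀ d ∈ h.support, d 2 + 1 ≤ d 0 + d 1 ∧ (d 0 + d 1) % 2 = (d 2 + 1) % 2 := by
    intro d hd
    have hBform : F (v 1) = X 2 * (X 4 * h) := by rw [hk, hh]; ring
    have hco : coeff (Finsupp.single 2 1 + (Finsupp.single 4 1 + d)) (F (v 1)) = coeff d h := by
      rw [hBform, coeff_X_mul, coeff_X_mul]
    have hmem : (Finsupp.single 2 1 + (Finsupp.single 4 1 + d)) ∈ (F (v 1)).support := by
      rw [mem_support_iff, hco]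
      exact mem_support_iff.mp hd
    obtain ⟨g1, g2⟩ := hBgood _ hmem
    have e0 : (Finsupp.single 2 1 + (Finsupp.single 4 1 + d) : Fin 5 →₀ ℕ) 0 = d 0 := by
      rw [Finsupp.add_apply, Finsupp.add_apply]; simp [Finsupp.single_apply]
    have e1 : (Finsupp.single 2 1 + (Finsupp.single 4 1 + d) : Fin 5 →₀ ℕ) 1 = d 1 := by
      rw [Finsupp.add_apply, Finsupp.add_apply]; simp [Finsupp.single_apply]
    have e2 : (Finsupp.single 2 1 + (Finsupp.single 4 1 + d) : Fin 5 →₀ ℕ) 2 = d 2 + 1 := by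
      rw [Finsupp.add_apply, Finsupp.add_apply]; simp [Finsupp.single_apply]; omega
    rw [e0, e1, e2] at g1 g2
    exact ⟨g1, g2⟩
  classical
  set P : A5 := ∑ d ∈ h.support.filter (fun d => d 0 ≠ 0),
      monomial (d - Finsupp.single 0 1) (coeff d h) with hP
  set Qq : A5 := ∑ d ∈ h.support.filter (fun d => ¬ d 0 ≠ 0),
      monomial (d - Finsupp.single 1 1) (coeff d h) with hQq
  have hsplith : X 0 * P + X 1 * Qq = h := by
    rw [hP, hQq, Finset.mul_sum, Finset.mul_sum]
    have hterm1 : ∀ d ∈ h.support.filter (fun d => d 0 ≠ 0),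
        X 0 * monomial (d - Finsupp.single 0 1) (coeff d h) = monomial d (coeff d h) := by
      intro d hd
      rw [Finset.mem_filter] at hd
      have hidx : Finsupp.single 0 1 + (d - Finsupp.single 0 1) = d := by
        ext i
        rw [Finsupp.add_apply, Finsupp.tsub_apply]
        have hle : (Finsupp.single 0 1 : Fin 5 →₀ ℕ) i ≤ d i := by
          fin_cases i <;> simp [Finsupp.single_apply] <;> omega
        omega
      rw [X_as_monomial5, monomial_mul, one_mul, hidx]
    have hterm2 : ∀ d ∈ h.support.filter (fun d => ¬ d 0 ≠ 0),
        X 1 * monomial (d - Finsupp.single 1 1) (coeff d h) = monomial d (coeff d h) := by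
      intro d hd
      rw [Finset.mem_filter] at hd
      have hd0 : d 0 = 0 := by
        have := hd.2
        omega
      have hd1 : 1 ≤ d 1 := by
        have := hAg d hd.1
        omega
      have hidx : Finsupp.single 1 1 + (d - Finsupp.single 1 1) = d := by
        ext i
        rw [Finsupp.add_apply, Finsupp.tsub_apply]
        have hle : (Finsupp.single 1 1 : Fin 5 →₀ ℕ) i ≤ d i := by
          fin_cases i <;> simp [Finsupp.single_apply] <;> omega
        omega
      rw [X_as_monomial5, monomial_mul, one_mul, hidx]
    rw [Finset.sum_congr rfl hterm1, Finset.sum_congr rfl hterm2,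
      Finset.sum_filter_add_sum_filter_not]
    exact h.support_sum_monomial_coeff
  have hPgood : IsGood P := by
    intro d' hd'
    rw [mem_support_iff, hP, coeff_sum] at hd'
    obtain ⟨d, hdmem, hdne⟩ := Finset.exists_ne_zero_of_sum_ne_zero hd'
    rw [Finset.mem_filter] at hdmem
    rw [coeff_monomial] at hdne
    by_cases heq : d - Finsupp.single 0 1 = d'
    · subst heq
      have hag := hAg d hdmem.1
      have c0 : (d - Finsupp.single 0 1 : Fin 5 →₀ ℕ) 0 = d 0 - 1 := by
        rw [Finsupp.tsub_apply]; simp [Finsupp.single_apply]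
      have c1 : (d - Finsupp.single 0 1 : Fin 5 →₀ ℕ) 1 = d 1 := by
        rw [Finsupp.tsub_apply]; simp [Finsupp.single_apply]
      have c2 : (d - Finsupp.single 0 1 : Fin 5 →₀ ℕ) 2 = d 2 := by
        rw [Finsupp.tsub_apply]; simp [Finsupp.single_apply]
      have hd0 : d 0 ≠ 0 := hdmem.2
      constructor
      · rw [c0, c1, c2]; omega
      · rw [c0, c1, c2]; omega
    · rw [if_neg heq] at hdne
      exact absurd rfl hdne
  have hQgood : IsGood Qq := by
    intro d' hd'
    rw [mem_support_iff, hQq, coeff_sum] at hd'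
    obtain ⟨d, hdmem, hdne⟩ := Finset.exists_ne_zero_of_sum_ne_zero hd'
    rw [Finset.mem_filter] at hdmem
    rw [coeff_monomial] at hdne
    by_cases heq : d - Finsupp.single 1 1 = d'
    · subst heq
      have hag := hAg d hdmem.1
      have hd0 : d 0 = 0 := by
        have := hdmem.2
        omega
      have c0 : (d - Finsupp.single 1 1 : Fin 5 →₀ ℕ) 0 = d 0 := by
        rw [Finsupp.tsub_apply]; simp [Finsupp.single_apply]
      have c1 : (d - Finsupp.single 1 1 : Fin 5 →₀ ℕ) 1 = d 1 - 1 := by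
        rw [Finsupp.tsub_apply]; simp [Finsupp.single_apply]
      have c2 : (d - Finsupp.single 1 1 : Fin 5 →₀ ℕ) 2 = d 2 := by
        rw [Finsupp.tsub_apply]; simp [Finsupp.single_apply]
      constructor
      · rw [c0, c1, c2]; omega
      · rw [c0, c1, c2]; omega
    · rw [if_neg heq] at hdne
      exact absurd rfl hdne
  obtain ⟨pa, hpa⟩ := good_mem P hPgood
  obtain ⟨qa, hqa⟩ := good_mem Qq hQgood
  refine ⟨![0, Ideal.Quotient.mk I pa, Ideal.Quotient.mk I qa], ?_⟩
  have hDL : ∀ i, dl ![0, Ideal.Quotient.mk I pa, Ideal.Quotient.mk I qa] i =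
      ![(s * y₁ + t * y₂) * Ideal.Quotient.mk I pa + (t * y₁ + u * y₂) * Ideal.Quotient.mk I qa,
        -(x₂ * y₂) * Ideal.Quotient.mk I pa + x₁ * y₂ * Ideal.Quotient.mk I qa,
        x₂ * y₁ * Ideal.Quotient.mk I pa + -(x₁ * y₁) * Ideal.Quotient.mk I qa] i := by
    intro i
    fin_cases i <;>
      simp [dl, Matrix.mulVecLin_apply, Matrix.mulVec, dotProduct,
        Fin.sum_univ_three] <;> ring
  funext i
  apply F_inj
  rw [hDL i]
  fin_cases i
  · show F ((s * y₁ + t * y₂) * Ideal.Quotient.mk I pa +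
        (t * y₁ + u * y₂) * Ideal.Quotient.mk I qa) = F (v 0)
    simp only [RingHom.map_add, RingHom.map_mul, F_s, F_t, F_u, F_y₁, F_y₂]
    rw [show F (Ideal.Quotient.mk I pa) = P from by rw [F_mk, hpa],
      show F (Ideal.Quotient.mk I qa) = Qq from by rw [F_mk, hqa]]
    rw [hA, ← hsplith]
    ring
  · show F (-(x₂ * y₂) * Ideal.Quotient.mk I pa + x₁ * y₂ * Ideal.Quotient.mk I qa) = F (v 1)
    simp only [RingHom.map_add, RingHom.map_mul, RingHom.map_neg, F_x₁, F_x₂, F_y₁, F_y₂]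
    rw [show F (Ideal.Quotient.mk I pa) = P from by rw [F_mk, hpa],
      show F (Ideal.Quotient.mk I qa) = Qq from by rw [F_mk, hqa]]
    rw [hk, hh, ← hsplith]
    ring
  · show F (x₂ * y₁ * Ideal.Quotient.mk I pa + -(x₁ * y₁) * Ideal.Quotient.mk I qa) = F (v 2)
    simp only [RingHom.map_add, RingHom.map_mul, RingHom.map_neg, F_x₁, F_x₂, F_y₁, F_y₂]
    rw [show F (Ideal.Quotient.mk I pa) = P from by rw [F_mk, hpa],
      show F (Ideal.Quotient.mk I qa) = Qq from by rw [F_mk, hqa]]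
    rw [hCc, hh, ← hsplith]
    ring


/-- `ker d_r = range d_l` as `Q`-submodules of `Q³`. -/
theorem stmt_9 : LinearMap.ker dr = LinearMap.range dl :=
  le_antisymm hard_dir easy_dir

end Stmt9
end
end
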